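/- In the symmetric case x = −y ∈ (0,1) with E = 0, the polynomial P(t) factors as P(t) = [x(15 − 5x² − 11x⁴ + x⁶)]^{−1}·(t² − x²)·(s(−15 + 10x² − 3x⁴ + t²(10 + 12x² − 6x⁴) + t⁴(−3 − 6x² + x⁴)) + 4εx(x²(−5+x²) − t⁴(3+x²) + t²(5 + 2x² + x⁴))), where C and D are given by the formulas of the boundary-value problem with y = −x. -/

import Mathlib

/-- In the symmetric case `x = -y`, `E = 0`, the polynomial `P` factors as (2.14). -/
theorem P_factorization (ε s x : ℝ) (hx0 : 0 < x) (hx1 : x < 1)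
    (hden : x * (15 - 5*x^2 - 11*x^4 + x^6) ≠ 0)
    (C D : ℝ)
    (hC : C = 3*(10*s + 80*ε*x + 30*s*x^2 - 10*s*x^4 - 16*ε*x^5 + 2*s*x^6)
        / (2*(x - 1)*x*(x + 1)*(-15 - 10*x^2 + x^4)))
    (hD : D = 5*(-6*s - 24*ε*x - 12*s*x^2 - 8*ε*x^3 + 2*s*x^4)
        / (2*(x - 1)*x*(x + 1)*(15 + 10*x^2 - x^4))) :
    ∀ t : ℝ,
      -4*ε*t^2 - (D/5)*t^6 + (D - C/3)*t^4 + (2*C - 3*D)*t^2 - 4*ε + C - D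
      = (x * (15 - 5*x^2 - 11*x^4 + x^6))⁻¹ *
        ((t^2 - x^2) *
          (s * (-15 + 10*x^2 - 3*x^4 + t^2*(10 + 12*x^2 - 6*x^4)
              + t^4*(-3 - 6*x^2 + x^4))
           + 4*ε*x*(x^2*(-5 + x^2) - t^4*(3 + x^2) + t^2*(5 + 2*x^2 + x^4)))) := by
  intro t
  have h1 : x - 1 ≠ 0 := by nlinarith
  have h2 : x ≠ 0 := ne_of_gt hx0
  have h3 : x + 1 ≠ 0 := by nlinarith
  have hx2 : x^2 < 1 := by nlinarith
  have hx4 : x^4 < 1 := by nlinarith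
  have h4 : -15 - 10*x^2 + x^4 ≠ 0 := by nlinarith [sq_nonneg x]
  have h5 : (15 : ℝ) + 10*x^2 - x^4 ≠ 0 := by nlinarith [sq_nonneg x]
  have h6 : 15 - 5*x^2 - 11*x^4 + x^6 ≠ 0 := by
    intro h
    apply hden
    rw [h, mul_zero]
  subst hC hD
  have h4' : -15 - x^2*10 + x^4 ≠ 0 := fun h => h4 (by linarith)
  have h5' : (15 : ℝ) + x^2*10 - x^4 ≠ 0 := fun h => h5 (by linarith)
  rw [eq_comm, inv_mul_eq_iff_eq_mul₀ hden]
  field_simp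
  ring
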